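/- Let X be a locally compact second-countable metrizable space carrying two jointly continuous flows (a_t)_{t∈ℝ} and (u_s)_{s∈ℝ} by homeomorphisms satisfying the commutation relation a_t ∘ u_s = u_{e^t·s} ∘ a_t for all t, s ∈ ℝ. Let μ be a Borel probability measure on X with (a_t)_*μ = μ for all t ∈ ℝ. Define the probability measure ν = ∫₀¹ (u_{−s})_*μ ds, i.e. ν(E) = ∫₀¹ μ({x : u_{−s}(x) ∈ E}) ds for Borel E. If ν = (1/2)·(a_{log 2})_*ν + (1/2)·(u_1 ∘ a_{log 2})_*ν, then μ is invariant under the whole flow u: (u_s)_*μ = μ for all s ∈ ℝ. -/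

import Mathlib

open MeasureTheory
open scoped ENNReal

/-- Affine change of variables for Lebesgue set-lintegrals over `Ioc`. -/
lemma aux_affine (g : ℝ → ℝ≥0∞) (hg : Measurable g) {c : ℝ} (hc : 0 < c) (d p q : ℝ) :
    ∫⁻ s in Set.Ioc p q, g (c * s + d) =
      ENNReal.ofReal c⁻¹ * ∫⁻ r in Set.Ioc (c * p + d) (c * q + d), g r := by
  have hT : Measurable fun s : ℝ => c * s + d := by fun_prop
  have hmap : Measure.map (fun s : ℝ => c * s + d) volume
      = ENNReal.ofReal c⁻¹ • (volume : Measure ℝ) := by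
    have h1 : (fun s : ℝ => c * s + d) = (fun s : ℝ => s + d) ∘ (fun s : ℝ => c * s) := rfl
    rw [h1, ← Measure.map_map (by fun_prop) (by fun_prop)]
    rw [show (fun s : ℝ => c * s) = (fun s : ℝ => c * s) from rfl]
    rw [Real.map_volume_mul_left hc.ne', Measure.map_smul, map_add_right_eq_self,
      abs_of_pos (inv_pos.mpr hc)]
  set F : ℝ → ℝ≥0∞ := (Set.Ioc (c * p + d) (c * q + d)).indicator g with hF_def
  have hF : Measurable F := hg.indicator measurableSet_Ioc
  have key : ∀ s : ℝ, (Set.Ioc p q).indicator (fun s => g (c * s + d)) s = F (c * s + d) := by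
    intro s
    have hiff : s ∈ Set.Ioc p q ↔ c * s + d ∈ Set.Ioc (c * p + d) (c * q + d) := by
      simp only [Set.mem_Ioc]
      constructor
      · rintro ⟨h1, h2⟩; constructor <;> nlinarith
      · rintro ⟨h1, h2⟩
        constructor <;> nlinarith
    by_cases hs : s ∈ Set.Ioc p q
    · rw [Set.indicator_of_mem hs, hF_def, Set.indicator_of_mem (hiff.mp hs)]
    · rw [Set.indicator_of_notMem hs, hF_def,
        Set.indicator_of_notMem (fun h => hs (hiff.mpr h))]
  calc ∫⁻ s in Set.Ioc p q, g (c * s + d)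
      = ∫⁻ s, (Set.Ioc p q).indicator (fun s => g (c * s + d)) s := by
        rw [lintegral_indicator measurableSet_Ioc]
    _ = ∫⁻ s, F (c * s + d) := by simp only [key]
    _ = ∫⁻ r, F r ∂(Measure.map (fun s : ℝ => c * s + d) volume) :=
        (lintegral_map hF hT).symm
    _ = ENNReal.ofReal c⁻¹ * ∫⁻ r, F r := by rw [hmap, lintegral_smul_measure, smul_eq_mul]
    _ = ENNReal.ofReal c⁻¹ * ∫⁻ r in Set.Ioc (c * p + d) (c * q + d), g r := by
        rw [hF_def, lintegral_indicator measurableSet_Ioc]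

/-- A bounded real sequence satisfying the discrete mean-value relation is 1-periodic. -/
lemma aux_seq (g : ℝ → ℝ) (hb : ∀ c, |g c| ≤ 1)
    (h : ∀ c, 2 * g c = g (c + 1) + g (c - 1)) (c : ℝ) : g (c + 1) = g c := by
  set d := g (c + 1) - g c with hd
  have step : ∀ n : ℕ, g (c + n + 1) - g (c + n) = d := by
    intro n
    induction n with
    | zero => simp [hd]
    | succ k ih =>
      have hk := h (c + k + 1)
      have e1 : c + (k + 1 : ℕ) + 1 = (c + k + 1) + 1 := by push_cast; ring
      have e2 : c + ((k : ℕ) + 1 : ℕ) = c + k + 1 := by push_cast; ring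
      have e3 : (c + k + 1) - 1 = c + k := by ring
      rw [e1, e2]
      rw [e3] at hk
      linarith
  have tel : ∀ n : ℕ, g (c + n) = g c + n * d := by
    intro n
    induction n with
    | zero => simp
    | succ k ih =>
      have := step k
      have e1 : c + ((k : ℕ) + 1 : ℕ) = c + k + 1 := by push_cast; ring
      rw [e1]
      push_cast
      linarith
  have hd0 : d = 0 := by
    by_contra hd0
    obtain ⟨n, hn⟩ := exists_nat_gt (2 / |d|)
    have h1 : |g (c + n) - g c| ≤ 2 := by
      have := hb (c + n); have := hb c
      have := abs_sub (g (c + n)) (g c)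
      calc |g (c + n) - g c| ≤ |g (c + n)| + |g c| := abs_sub _ _
        _ ≤ 2 := by linarith
    rw [tel n] at h1
    simp only [add_sub_cancel_left] at h1
    rw [abs_mul, Nat.abs_cast] at h1
    have hdpos : 0 < |d| := abs_pos.mpr hd0
    have : (n : ℝ) ≤ 2 / |d| := by
      rw [le_div_iff₀ hdpos]; linarith
    linarith
  have hfin : g (c + 1) - g c = 0 := by rw [← hd]; exact hd0
  linarith

/-- **(Key step in Theorem 3.8.)**
Let `X` be a locally compact second-countable metrizable space carrying jointly continuous
flows `a` and `u` satisfying `a t ∘ u s = u (eᵗ·s) ∘ a t`.  Let `μ` be an `a`-invariant Borel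
probability measure, and let `ν = ∫₀¹ (u (−s))_* μ ds`.  If
`ν = ½·(a (log 2))_* ν + ½·(u 1 ∘ a (log 2))_* ν`, then `μ` is `u`-invariant. -/
theorem stationarity_implies_unipotent_invariance
    {X : Type*} [TopologicalSpace X] [LocallyCompactSpace X] [SecondCountableTopology X]
    [TopologicalSpace.MetrizableSpace X] [MeasurableSpace X] [BorelSpace X]
    (a u : ℝ → X → X)
    (ha_cont : Continuous fun p : ℝ × X => a p.1 p.2)
    (hu_cont : Continuous fun p : ℝ × X => u p.1 p.2)
    (ha_zero : ∀ x, a 0 x = x) (ha_add : ∀ t t' x, a (t + t') x = a t (a t' x))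
    (hu_zero : ∀ x, u 0 x = x) (hu_add : ∀ s s' x, u (s + s') x = u s (u s' x))
    (hcomm : ∀ t s x, a t (u s x) = u (Real.exp t * s) (a t x))
    (μ : Measure X) [IsProbabilityMeasure μ]
    (hμa : ∀ t : ℝ, Measure.map (a t) μ = μ)
    (ν : Measure X)
    (hν : ∀ E : Set X, MeasurableSet E →
      ν E = ∫⁻ s in Set.Icc (0 : ℝ) 1, μ ((fun x => u (-s) x) ⁻¹' E))
    (hstat : ν = (2⁻¹ : ENNReal) • Measure.map (a (Real.log 2)) ν
        + (2⁻¹ : ENNReal) • Measure.map (fun x => u 1 (a (Real.log 2) x)) ν) :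
    ∀ s : ℝ, Measure.map (u s) μ = μ := by
  -- measurability of the individual maps
  have hu_measf : ∀ r : ℝ, Measurable (u r) := fun r =>
    (hu_cont.comp (Continuous.prodMk continuous_const continuous_id)).measurable
  have ha_measf : ∀ t : ℝ, Measurable (a t) := fun t =>
    (ha_cont.comp (Continuous.prodMk continuous_const continuous_id)).measurable
  have hainv : ∀ (t : ℝ) (E : Set X), MeasurableSet E → μ (a t ⁻¹' E) = μ E := by
    intro t E hE
    conv_rhs => rw [← hμa t]
    rw [Measure.map_apply (ha_measf t) hE]
  -- the fundamental family of functions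
  set f : Set X → ℝ → ℝ≥0∞ := fun E r => μ (u (-r) ⁻¹' E) with hf_def
  have hf_meas : ∀ E : Set X, MeasurableSet E → Measurable (f E) := by
    intro E hE
    have hSm : MeasurableSet {p : ℝ × X | u (-p.1) p.2 ∈ E} :=
      (hu_cont.comp ((continuous_fst.neg).prodMk continuous_snd)).measurable hE
    have := measurable_measure_prodMk_left (ν := μ) hSm
    exact this
  have hf_le : ∀ E r, f E r ≤ 1 := fun E r => prob_le_one
  have hf_trans : ∀ (E : Set X) (t r : ℝ), f (u t ⁻¹' E) r = f E (r - t) := by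
    intro E t r
    have hset : u (-r) ⁻¹' (u t ⁻¹' E) = u (-(r - t)) ⁻¹' E := by
      ext x
      simp only [Set.mem_preimage]
      rw [show (-(r - t)) = t + -r by ring, hu_add]
    show μ _ = μ _
    rw [hset]
  have hf_scale : ∀ (E : Set X), MeasurableSet E → ∀ (t r : ℝ),
      f (a t ⁻¹' E) r = f E (Real.exp t * r) := by
    intro E hE t r
    have hset : u (-r) ⁻¹' (a t ⁻¹' E) = a t ⁻¹' (u (-(Real.exp t * r)) ⁻¹' E) := by
      ext x
      simp only [Set.mem_preimage]
      rw [hcomm t (-r) x, show Real.exp t * (-r) = -(Real.exp t * r) by ring]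
    show μ _ = μ _
    rw [hset, hainv t _ ((hu_measf _) hE)]
  -- ν in Ioc form
  have hν' : ∀ E : Set X, MeasurableSet E → ν E = ∫⁻ s in Set.Ioc (0:ℝ) 1, f E s := by
    intro E hE
    rw [hν E hE]
    exact (setLIntegral_congr Ioc_ae_eq_Icc).symm
  -- the window averages
  set G : Set X → ℝ → ℝ≥0∞ := fun E c => ∫⁻ r in Set.Ioc c (c + 1), f E r with hG_def
  have hG_le : ∀ E c, G E c ≤ 1 := by
    intro E c
    calc G E c ≤ ∫⁻ _ in Set.Ioc c (c + 1), 1 := lintegral_mono fun r => hf_le E r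
      _ = volume (Set.Ioc c (c + 1)) := by rw [setLIntegral_const, one_mul]
      _ = 1 := by rw [Real.volume_Ioc]; norm_num
  have hG_fin : ∀ E c, G E c ≠ ∞ := fun E c =>
    ((hG_le E c).trans_lt ENNReal.one_lt_top).ne
  have hsplit : ∀ (E : Set X) (α β γ : ℝ), α ≤ β → β ≤ γ →
      ∫⁻ r in Set.Ioc α γ, f E r
        = (∫⁻ r in Set.Ioc α β, f E r) + ∫⁻ r in Set.Ioc β γ, f E r := by
    intro E α β γ h1 h2
    rw [← Set.Ioc_union_Ioc_eq_Ioc h1 h2, lintegral_union measurableSet_Ioc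
      (Set.Ioc_disjoint_Ioc_of_le le_rfl)]
  have e2 : Real.exp (Real.log 2) = 2 := Real.exp_log two_pos
  have hIoc : ∀ (E : Set X) (p q p' q' : ℝ), p = p' → q = q' →
      (∫⁻ r in Set.Ioc p q, f E r) = ∫⁻ r in Set.Ioc p' q', f E r := by
    rintro E p q p' q' rfl rfl; rfl
  -- the stationarity relation for all window averages
  have key1 : ∀ E : Set X, MeasurableSet E → ∀ c : ℝ,
      G E c = 2⁻¹ * (ENNReal.ofReal 2⁻¹ * (G E c + G E (c + 1)))
        + 2⁻¹ * (ENNReal.ofReal 2⁻¹ * (G E (c - 1) + G E c)) := by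
    intro E hE c
    set E' : Set X := u (-c) ⁻¹' E with hE'_def
    have hE' : MeasurableSet E' := (hu_measf _) hE
    have hfE' : ∀ r : ℝ, f E' r = f E (r + c) := by
      intro r
      rw [hE'_def, hf_trans]
      ring_nf
    have hA : Measurable (a (Real.log 2)) := ha_measf _
    have hU1A : Measurable fun x => u 1 (a (Real.log 2) x) := (hu_measf 1).comp hA
    have hs0 : ν E' = 2⁻¹ * ν (a (Real.log 2) ⁻¹' E')
        + 2⁻¹ * ν ((fun x => u 1 (a (Real.log 2) x)) ⁻¹' E') := by
      conv_lhs => rw [hstat]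
      rw [Measure.add_apply, Measure.smul_apply, Measure.smul_apply,
        Measure.map_apply hA hE', Measure.map_apply hU1A hE', smul_eq_mul, smul_eq_mul]
    have hT1 : ν E' = G E c := by
      rw [hν' E' hE']
      have hthis : ∀ s : ℝ, f E' s = f E (1 * s + c) := by
        intro s; rw [hfE', one_mul]
      simp only [hthis]
      rw [aux_affine (f E) (hf_meas E hE) one_pos c 0 1]
      norm_num [add_comm]
      rfl
    have hT2 : ν (a (Real.log 2) ⁻¹' E') = ENNReal.ofReal 2⁻¹ * (G E c + G E (c + 1)) := by
      rw [hν' _ (hA hE')]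
      have hthis : ∀ s : ℝ, f (a (Real.log 2) ⁻¹' E') s = f E (2 * s + c) := by
        intro s
        rw [hf_scale E' hE', e2, hfE']
      simp only [hthis]
      rw [aux_affine (f E) (hf_meas E hE) two_pos c 0 1]
      have hset : Set.Ioc (2 * (0:ℝ) + c) (2 * 1 + c) = Set.Ioc c ((c+1) + 1) := by
        have h1 : (2 * (0:ℝ) + c) = c := by ring
        have h2 : (2 * (1:ℝ) + c) = (c + 1) + 1 := by ring
        rw [h1, h2]
      rw [hset, hsplit E c (c+1) ((c+1)+1) (by linarith) (by linarith)]
    have hT3 : ν ((fun x => u 1 (a (Real.log 2) x)) ⁻¹' E')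
        = ENNReal.ofReal 2⁻¹ * (G E (c - 1) + G E c) := by
      have hsetp : (fun x => u 1 (a (Real.log 2) x)) ⁻¹' E'
          = a (Real.log 2) ⁻¹' (u 1 ⁻¹' E') := rfl
      rw [hsetp, hν' _ (hA ((hu_measf 1) hE'))]
      have hthis : ∀ s : ℝ, f (a (Real.log 2) ⁻¹' (u 1 ⁻¹' E')) s = f E (2 * s + (c - 1)) := by
        intro s
        rw [hf_scale _ ((hu_measf 1) hE'), e2, hf_trans, hfE']
        ring_nf
      simp only [hthis]
      rw [aux_affine (f E) (hf_meas E hE) two_pos (c-1) 0 1]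
      have hset : Set.Ioc (2 * (0:ℝ) + (c-1)) (2 * 1 + (c-1)) = Set.Ioc (c-1) (((c-1))+1+1) := by
        have h1 : (2 * (0:ℝ) + (c-1)) = c - 1 := by ring
        have h2 : (2 * (1:ℝ) + (c-1)) = ((c-1)) + 1 + 1 := by ring
        rw [h1, h2]
      rw [hset, hsplit E (c-1) ((c-1)+1) ((c-1)+1+1) (by linarith) (by linarith)]
      have hp2 : (∫⁻ r in Set.Ioc ((c-1)+1) ((c-1)+1+1), f E r) = G E c :=
        hIoc E _ _ _ _ (by ring) (by ring)
      rw [hp2]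
    rw [hT1, hT2, hT3] at hs0
    exact hs0
  -- G is 1-periodic
  have key2 : ∀ E : Set X, MeasurableSet E → ∀ c : ℝ, G E (c + 1) = G E c := by
    intro E hE
    set g : ℝ → ℝ := fun c => (G E c).toReal with hg_def
    have hgb : ∀ c, |g c| ≤ 1 := by
      intro c
      rw [abs_of_nonneg ENNReal.toReal_nonneg]
      calc (G E c).toReal ≤ (1 : ℝ≥0∞).toReal :=
            ENNReal.toReal_mono ENNReal.one_ne_top (hG_le E c)
        _ = 1 := by simp
    have hrec : ∀ c, 2 * g c = g (c + 1) + g (c - 1) := by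
      intro c
      have h := key1 E hE c
      have h4 : ENNReal.ofReal 2⁻¹ = 2⁻¹ := by
        rw [ENNReal.ofReal_inv_of_pos two_pos]
        norm_num
      rw [h4] at h
      have f1 := hG_fin E c
      have f2 := hG_fin E (c + 1)
      have f3 := hG_fin E (c - 1)
      have fm : (2⁻¹ : ℝ≥0∞) ≠ ∞ := by simp
      have hfin1 : (2⁻¹ : ℝ≥0∞) * (2⁻¹ * (G E c + G E (c + 1))) ≠ ∞ :=
        ENNReal.mul_ne_top fm (ENNReal.mul_ne_top fm (ENNReal.add_ne_top.mpr ⟨f1, f2⟩))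
      have hfin2 : (2⁻¹ : ℝ≥0∞) * (2⁻¹ * (G E (c - 1) + G E c)) ≠ ∞ :=
        ENNReal.mul_ne_top fm (ENNReal.mul_ne_top fm (ENNReal.add_ne_top.mpr ⟨f3, f1⟩))
      have h' := congrArg ENNReal.toReal h
      rw [ENNReal.toReal_add hfin1 hfin2, ENNReal.toReal_mul, ENNReal.toReal_mul,
        ENNReal.toReal_mul, ENNReal.toReal_mul, ENNReal.toReal_add f1 f2,
        ENNReal.toReal_add f3 f1] at h'
      have h2t : ((2 : ℝ≥0∞)⁻¹).toReal = 2⁻¹ := by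
        rw [ENNReal.toReal_inv]
        norm_num
      rw [h2t] at h'
      have hgc : (G E c).toReal = g c := rfl
      have hgc1 : (G E (c + 1)).toReal = g (c + 1) := rfl
      have hgc2 : (G E (c - 1)).toReal = g (c - 1) := rfl
      rw [hgc, hgc1, hgc2] at h'
      linarith
    intro c
    exact (ENNReal.toReal_eq_toReal_iff' (hG_fin E (c + 1)) (hG_fin E c)).mp (aux_seq g hgb hrec c)
  -- the dyadic-scale averages
  set J : ℕ → Set X → ℝ → ℝ≥0∞ :=
    fun n E c => ∫⁻ r in Set.Ioc c (c + (2:ℝ)⁻¹ ^ n), f E r with hJ_def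
  have hJIoc : ∀ (n : ℕ) (E : Set X) (p p' : ℝ), p = p' → J n E p = J n E p' := by
    rintro n E p p' rfl; rfl
  have hJ0 : ∀ E c, J 0 E c = G E c := by
    intro E c
    exact hIoc E _ _ _ _ rfl (by norm_num)
  have hJrec : ∀ (n : ℕ) (E : Set X), MeasurableSet E → ∀ c : ℝ,
      J n (a (-Real.log 2) ⁻¹' E) (2 * c) = ENNReal.ofReal 2 * J (n + 1) E c := by
    intro n E hE c
    have hthis : ∀ s : ℝ, f (a (-Real.log 2) ⁻¹' E) s = f E (2⁻¹ * s + 0) := by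
      intro s
      rw [hf_scale E hE, Real.exp_neg, e2, add_zero]
    show (∫⁻ r in Set.Ioc (2*c) (2*c + (2:ℝ)⁻¹ ^ n), f (a (-Real.log 2) ⁻¹' E) r) = _
    simp only [hthis]
    rw [aux_affine (f E) (hf_meas E hE) (by norm_num : (0:ℝ) < 2⁻¹) 0 (2*c) (2*c + 2⁻¹ ^ n)]
    have hOR : ENNReal.ofReal ((2:ℝ)⁻¹)⁻¹ = ENNReal.ofReal 2 := by norm_num
    rw [hOR]
    congr 1
    exact hIoc E _ _ _ _ (by ring) (by rw [pow_succ]; ring)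
  have hJper : ∀ (n : ℕ) (E : Set X), MeasurableSet E → ∀ c : ℝ,
      J n E (c + (2:ℝ)⁻¹ ^ n) = J n E c := by
    intro n
    induction n with
    | zero =>
      intro E hE c
      rw [hJ0, hJ0]
      rw [show c + (2:ℝ)⁻¹ ^ 0 = c + 1 by norm_num]
      exact key2 E hE c
    | succ k ih =>
      intro E hE c
      have hE'' : MeasurableSet (a (-Real.log 2) ⁻¹' E) := (ha_measf _) hE
      have h1 := hJrec k E hE c
      have h2 := hJrec k E hE (c + (2:ℝ)⁻¹ ^ (k + 1))
      have h3 : J k (a (-Real.log 2) ⁻¹' E) (2 * (c + (2:ℝ)⁻¹ ^ (k + 1)))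
          = J k (a (-Real.log 2) ⁻¹' E) (2 * c + (2:ℝ)⁻¹ ^ k) := by
        apply hJIoc
        rw [pow_succ]; ring
      have h4 : J k (a (-Real.log 2) ⁻¹' E) (2 * c + (2:ℝ)⁻¹ ^ k)
          = J k (a (-Real.log 2) ⁻¹' E) (2 * c) := ih _ hE'' (2 * c)
      have h5 : ENNReal.ofReal 2 * J (k+1) E (c + (2:ℝ)⁻¹ ^ (k + 1))
          = ENNReal.ofReal 2 * J (k+1) E c := by
        rw [← h2, ← h1, h3, h4]
      have h2ne : (ENNReal.ofReal 2) ≠ 0 := by norm_num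
      have h2nt : (ENNReal.ofReal 2) ≠ ∞ := ENNReal.ofReal_ne_top
      exact (ENNReal.mul_right_inj h2ne h2nt).mp h5
  -- iterated periodicity
  have hJperm : ∀ (n : ℕ) (E : Set X), MeasurableSet E → ∀ (c : ℝ) (m : ℕ),
      J n E (c + m * (2:ℝ)⁻¹ ^ n) = J n E c := by
    intro n E hE c m
    induction m with
    | zero => simp
    | succ k ih =>
      have h1 : J n E (c + (k + 1 : ℕ) * (2:ℝ)⁻¹ ^ n)
          = J n E ((c + k * (2:ℝ)⁻¹ ^ n) + (2:ℝ)⁻¹ ^ n) := by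
        apply hJIoc
        push_cast; ring
      rw [h1, hJper n E hE, ih]
  -- summing the small pieces
  have hsum : ∀ (n : ℕ) (E : Set X), MeasurableSet E → ∀ (c : ℝ) (m : ℕ),
      (∫⁻ r in Set.Ioc c (c + m * (2:ℝ)⁻¹ ^ n), f E r) = m * J n E c := by
    intro n E hE c m
    induction m with
    | zero => simp
    | succ k ih =>
      have hh : (0:ℝ) < (2:ℝ)⁻¹ ^ n := by positivity
      have hle1 : c ≤ c + k * (2:ℝ)⁻¹ ^ n := by
        have : (0:ℝ) ≤ k * (2:ℝ)⁻¹ ^ n := by positivity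
        linarith
      have hle2 : c + k * (2:ℝ)⁻¹ ^ n ≤ c + (k+1 : ℕ) * (2:ℝ)⁻¹ ^ n := by
        push_cast; nlinarith
      rw [hsplit E c (c + k * (2:ℝ)⁻¹ ^ n) (c + (k+1 : ℕ) * (2:ℝ)⁻¹ ^ n) hle1 hle2, ih]
      have hpiece : (∫⁻ r in Set.Ioc (c + k * (2:ℝ)⁻¹ ^ n) (c + (k+1 : ℕ) * (2:ℝ)⁻¹ ^ n), f E r)
          = J n E (c + k * (2:ℝ)⁻¹ ^ n) := by
        apply hIoc
        · rfl
        · push_cast; ring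
      rw [hpiece, hJperm n E hE c k]
      push_cast
      ring
  -- G in terms of J
  have hGJ : ∀ (n : ℕ) (E : Set X), MeasurableSet E → ∀ c : ℝ,
      G E c = ((2:ℕ) ^ n : ℕ) * J n E c := by
    intro n E hE c
    have h2 : G E c = ∫⁻ r in Set.Ioc c (c + ((2:ℕ) ^ n : ℕ) * (2:ℝ)⁻¹ ^ n), f E r := by
      apply hIoc
      · rfl
      · push_cast
        rw [← mul_pow]
        norm_num
    rw [h2, hsum n E hE c ((2:ℕ) ^ n)]
  -- G has all dyadic periods
  have hGper : ∀ (n : ℕ) (E : Set X), MeasurableSet E → ∀ c : ℝ,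
      G E (c + (2:ℝ)⁻¹ ^ n) = G E c := by
    intro n E hE c
    rw [hGJ n E hE, hGJ n E hE, hJper n E hE]
  have hGcongr : ∀ (E : Set X) (p p' : ℝ), p = p' → G E p = G E p' := by
    rintro E p p' rfl; rfl
  have hGper2 : ∀ (n : ℕ) (E : Set X), MeasurableSet E → ∀ (c : ℝ) (m : ℕ),
      G E (c + m * (2:ℝ)⁻¹ ^ n) = G E c := by
    intro n E hE c m
    induction m with
    | zero => simp
    | succ k ih =>
      have h1 : G E (c + (k + 1 : ℕ) * (2:ℝ)⁻¹ ^ n)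
          = G E ((c + k * (2:ℝ)⁻¹ ^ n) + (2:ℝ)⁻¹ ^ n) := by
        apply hGcongr; push_cast; ring
      rw [h1, hGper n E hE, ih]
  -- Lipschitz-type bound for G
  have hGlip : ∀ (E : Set X) (c₁ c₂ : ℝ), c₁ ≤ c₂ →
      |(G E c₂).toReal - (G E c₁).toReal| ≤ c₂ - c₁ := by
    intro E c₁ c₂ h
    have hbd : ∀ (α β : ℝ), α ≤ β →
        (∫⁻ r in Set.Ioc α β, f E r) ≤ ENNReal.ofReal (β - α) := by
      intro α β hab
      calc (∫⁻ r in Set.Ioc α β, f E r) ≤ ∫⁻ _ in Set.Ioc α β, 1 :=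
            lintegral_mono fun r => hf_le E r
        _ = volume (Set.Ioc α β) := by rw [setLIntegral_const, one_mul]
        _ = ENNReal.ofReal (β - α) := Real.volume_Ioc
    have hmono : ∀ (α β α' β' : ℝ), α' ≤ α → β ≤ β' →
        (∫⁻ r in Set.Ioc α β, f E r) ≤ ∫⁻ r in Set.Ioc α' β', f E r :=
      fun α β α' β' h1 h2 => lintegral_mono' (Measure.restrict_mono
        (Set.Ioc_subset_Ioc h1 h2) le_rfl) le_rfl
    have hd1 : G E c₂ ≤ G E c₁ + ENNReal.ofReal (c₂ - c₁) := by
      calc G E c₂ ≤ ∫⁻ r in Set.Ioc c₁ (c₂ + 1), f E r := hmono _ _ _ _ h (by linarith)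
        _ = G E c₁ + ∫⁻ r in Set.Ioc (c₁ + 1) (c₂ + 1), f E r :=
            hsplit E c₁ (c₁ + 1) (c₂ + 1) (by linarith) (by linarith)
        _ ≤ G E c₁ + ENNReal.ofReal (c₂ - c₁) := by
            refine add_le_add le_rfl ?_
            refine (hbd _ _ (by linarith)).trans ?_
            rw [show c₂ + 1 - (c₁ + 1) = c₂ - c₁ by ring]
    have hd2 : G E c₁ ≤ G E c₂ + ENNReal.ofReal (c₂ - c₁) := by
      calc G E c₁ ≤ ∫⁻ r in Set.Ioc c₁ (c₂ + 1), f E r := hmono _ _ _ _ le_rfl (by linarith)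
        _ = (∫⁻ r in Set.Ioc c₁ c₂, f E r) + G E c₂ :=
            hsplit E c₁ c₂ (c₂ + 1) h (by linarith)
        _ ≤ ENNReal.ofReal (c₂ - c₁) + G E c₂ := add_le_add (hbd _ _ h) le_rfl
        _ = G E c₂ + ENNReal.ofReal (c₂ - c₁) := add_comm _ _
    have hfin : ∀ c, G E c ≠ ∞ := hG_fin E
    have ht1 : (G E c₂).toReal ≤ (G E c₁).toReal + (c₂ - c₁) := by
      have := ENNReal.toReal_mono (ENNReal.add_ne_top.mpr ⟨hfin c₁, ENNReal.ofReal_ne_top⟩) hd1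
      rwa [ENNReal.toReal_add (hfin c₁) ENNReal.ofReal_ne_top,
        ENNReal.toReal_ofReal (by linarith)] at this
    have ht2 : (G E c₁).toReal ≤ (G E c₂).toReal + (c₂ - c₁) := by
      have := ENNReal.toReal_mono (ENNReal.add_ne_top.mpr ⟨hfin c₂, ENNReal.ofReal_ne_top⟩) hd2
      rwa [ENNReal.toReal_add (hfin c₂) ENNReal.ofReal_ne_top,
        ENNReal.toReal_ofReal (by linarith)] at this
    rw [abs_sub_le_iff]
    constructor <;> linarith
  -- G is constant
  have hGconst : ∀ (E : Set X), MeasurableSet E → ∀ c : ℝ, G E c = ν E := by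
    intro E hE
    have hG0 : ν E = G E 0 := by
      rw [hν' E hE]
      exact hIoc E _ _ _ _ rfl (by norm_num)
    have h0 : ∀ c : ℝ, 0 ≤ c → G E c = G E 0 := by
      intro c hc
      have habs : ∀ n : ℕ, |(G E c).toReal - (G E 0).toReal| ≤ (2:ℝ)⁻¹ ^ n := by
        intro n
        set h : ℝ := (2:ℝ)⁻¹ ^ n with hh_def
        have hhpos : 0 < h := by positivity
        have hpow : (2:ℝ) ^ n * h = 1 := by
          rw [hh_def, ← mul_pow]; norm_num
        set m : ℕ := ⌊c * 2 ^ n⌋₊ with hm_def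
        have hm1 : (m : ℝ) ≤ c * 2 ^ n := Nat.floor_le (by positivity)
        have hm2 : c * 2 ^ n < m + 1 := Nat.lt_floor_add_one _
        have hmh1 : (m : ℝ) * h ≤ c := by nlinarith [pow_pos (by norm_num : (0:ℝ) < 2) n]
        have hmh2 : c ≤ (m : ℝ) * h + h := by nlinarith [pow_pos (by norm_num : (0:ℝ) < 2) n]
        have hGm : G E ((m : ℝ) * h) = G E 0 := by
          have := hGper2 n E hE 0 m
          rw [zero_add] at this
          exact this
        have := hGlip E ((m : ℝ) * h) c hmh1
        rw [hGm] at this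
        calc |(G E c).toReal - (G E 0).toReal| ≤ c - (m : ℝ) * h := this
          _ ≤ h := by linarith
      have hz : |(G E c).toReal - (G E 0).toReal| = 0 := by
        by_contra hne
        have hpos : 0 < |(G E c).toReal - (G E 0).toReal| :=
          lt_of_le_of_ne (abs_nonneg _) (Ne.symm hne)
        obtain ⟨n, hn⟩ := exists_pow_lt_of_lt_one hpos (by norm_num : (2:ℝ)⁻¹ < 1)
        exact absurd (habs n) (not_le.mpr hn)
      have := abs_eq_zero.mp hz
      have heq : (G E c).toReal = (G E 0).toReal := by linarith
      exact (ENNReal.toReal_eq_toReal_iff' (hG_fin E c) (hG_fin E 0)).mp heq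
    intro c
    rcases le_or_gt 0 c with hc | hc
    · rw [h0 c hc, hG0]
    · set m : ℕ := ⌈-c⌉₊ with hm_def
      have hcm : 0 ≤ c + m := by
        have := Nat.le_ceil (-c)
        linarith
      have h1 : G E c = G E (c + m) := by
        have := hGper2 0 E hE c m
        rw [pow_zero, mul_one] at this
        exact this.symm
      rw [h1, h0 (c + m) hcm, hG0]
  -- ν as a multiple of the small-scale averages
  have hνJ : ∀ (n : ℕ) (E : Set X), MeasurableSet E → ∀ c : ℝ,
      ν E = ((2:ℕ) ^ n : ℕ) * J n E c := by
    intro n E hE c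
    rw [← hGconst E hE c, hGJ n E hE c]
  -- ν is a probability measure
  have hν_univ : ν Set.univ = 1 := by
    rw [hν' Set.univ MeasurableSet.univ]
    have : ∀ s : ℝ, f Set.univ s = 1 := by
      intro s
      show μ _ = 1
      rw [Set.preimage_univ]
      exact measure_univ
    simp only [this]
    rw [setLIntegral_const, one_mul, Real.volume_Ioc]
    norm_num
  have hprob_ν : IsProbabilityMeasure ν := ⟨hν_univ⟩
  -- the key semicontinuity estimate: for open sets, f O r ≤ ν O everywhere
  have hopen : ∀ (r₀ : ℝ) (O : Set X), IsOpen O → f O r₀ ≤ ν O := by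
    intro r₀ O hO
    have hOm : MeasurableSet O := hO.measurableSet
    by_contra hlt
    push_neg at hlt
    obtain ⟨κ, hκ1, hκ2⟩ := exists_between hlt
    -- find a small right-neighborhood on which f O ≥ κ
    have hδ : ∃ n : ℕ, ∀ r ∈ Set.Ioc r₀ (r₀ + (2:ℝ)⁻¹ ^ n), κ ≤ f O r := by
      by_contra hno
      push_neg at hno
      choose r hr hfr using hno
      have hrt : Filter.Tendsto r Filter.atTop (nhds r₀) := by
        have hub : Filter.Tendsto (fun n : ℕ => r₀ + (2:ℝ)⁻¹ ^ n) Filter.atTop (nhds r₀) := by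
          have := tendsto_pow_atTop_nhds_zero_of_lt_one
            (by norm_num : (0:ℝ) ≤ 2⁻¹) (by norm_num : (2:ℝ)⁻¹ < 1)
          have h2 := Filter.Tendsto.const_add r₀ this
          simpa using h2
        refine tendsto_of_tendsto_of_tendsto_of_le_of_le
          (tendsto_const_nhds : Filter.Tendsto (fun _ : ℕ => r₀) _ _) hub ?_ ?_
        · exact fun n => (hr n).1.le
        · exact fun n => (hr n).2
      -- Fatou-type lower semicontinuity
      have hfatou : f O r₀ ≤ Filter.liminf (fun n => f O (r n)) Filter.atTop := by
        have hmeas : ∀ n : ℕ, Measurable fun x =>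
            (u (-(r n)) ⁻¹' O).indicator (fun _ => (1:ℝ≥0∞)) x := fun n =>
          (measurable_const.indicator ((hu_measf _) hOm))
        have hind : ∀ x : X, (u (-r₀) ⁻¹' O).indicator (fun _ => (1:ℝ≥0∞)) x ≤
            Filter.liminf (fun n => (u (-(r n)) ⁻¹' O).indicator (fun _ => (1:ℝ≥0∞)) x)
              Filter.atTop := by
          intro x
          by_cases hx : x ∈ u (-r₀) ⁻¹' O
          · have hcx : Continuous fun s : ℝ => u (-s) x :=
              hu_cont.comp ((continuous_id.neg).prodMk continuous_const)
            have htx : Filter.Tendsto (fun n => u (-(r n)) x) Filter.atTop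
                (nhds (u (-r₀) x)) := (hcx.tendsto r₀).comp hrt
            have hev : ∀ᶠ n in Filter.atTop, u (-(r n)) x ∈ O :=
              htx.eventually (hO.mem_nhds hx)
            have hev1 : ∀ᶠ n in Filter.atTop,
                (1:ℝ≥0∞) ≤ (u (-(r n)) ⁻¹' O).indicator (fun _ => (1:ℝ≥0∞)) x := by
              filter_upwards [hev] with n hn
              rw [Set.indicator_of_mem (show x ∈ u (-(r n)) ⁻¹' O from hn)]
            have := Filter.le_liminf_of_le (by isBoundedDefault) hev1
            rw [Set.indicator_of_mem hx]
            exact this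
          · rw [Set.indicator_of_notMem hx]
            exact zero_le
        have hindint : ∀ s : ℝ,
            (∫⁻ x, (u (-s) ⁻¹' O).indicator (fun _ => (1:ℝ≥0∞)) x ∂μ) = f O s := by
          intro s
          rw [lintegral_indicator ((hu_measf _) hOm), setLIntegral_one]
        calc f O r₀ = ∫⁻ x, (u (-r₀) ⁻¹' O).indicator (fun _ => (1:ℝ≥0∞)) x ∂μ :=
              (hindint r₀).symm
          _ ≤ ∫⁻ x, Filter.liminf
                (fun n => (u (-(r n)) ⁻¹' O).indicator (fun _ => (1:ℝ≥0∞)) x)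
                Filter.atTop ∂μ := lintegral_mono hind
          _ ≤ Filter.liminf (fun n => ∫⁻ x,
                (u (-(r n)) ⁻¹' O).indicator (fun _ => (1:ℝ≥0∞)) x ∂μ) Filter.atTop :=
              lintegral_liminf_le hmeas
          _ = Filter.liminf (fun n => f O (r n)) Filter.atTop := by
              simp only [hindint]
      have hbound : Filter.liminf (fun n => f O (r n)) Filter.atTop ≤ κ := by
        have h1 : Filter.liminf (fun n => f O (r n)) Filter.atTop ≤
            Filter.liminf (fun _ : ℕ => κ) Filter.atTop := by
          exact Filter.liminf_le_liminf (Filter.Eventually.of_forall fun n => (hfr n).le)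
        rwa [Filter.liminf_const] at h1
      exact absurd (hfatou.trans hbound) (not_le.mpr hκ2)
    obtain ⟨n, hn⟩ := hδ
    -- the average over a small window is ≥ κ, contradiction
    have h1 : κ * ENNReal.ofReal ((2:ℝ)⁻¹ ^ n) ≤ J n O r₀ := by
      have hconst : (∫⁻ _ in Set.Ioc r₀ (r₀ + (2:ℝ)⁻¹ ^ n), κ)
          = κ * ENNReal.ofReal ((2:ℝ)⁻¹ ^ n) := by
        rw [setLIntegral_const, Real.volume_Ioc]
        congr 1
        congr 1
        ring
      rw [← hconst]
      refine setLIntegral_mono (hf_meas O hOm) ?_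
      intro r hrmem
      exact hn r hrmem
    have h2 : ν O = ((2:ℕ) ^ n : ℕ) * J n O r₀ := hνJ n O hOm r₀
    have h3 : κ ≤ ν O := by
      rw [h2]
      calc κ = ((2:ℕ) ^ n : ℕ) * (κ * ENNReal.ofReal ((2:ℝ)⁻¹ ^ n)) := by
            rw [ENNReal.ofReal_pow (by norm_num : (0:ℝ) ≤ 2⁻¹)]
            rw [ENNReal.ofReal_inv_of_pos two_pos]
            rw [show ENNReal.ofReal 2 = 2 by norm_num]
            rw [← mul_assoc]
            rw [show (((2:ℕ) ^ n : ℕ) : ℝ≥0∞) * κ = κ * ((2:ℝ≥0∞) ^ n) by push_cast; ring]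
            rw [mul_assoc, ← mul_pow]
            rw [ENNReal.mul_inv_cancel (by norm_num) (by norm_num)]
            simp
        _ ≤ ((2:ℕ) ^ n : ℕ) * J n O r₀ := by
            gcongr
    exact absurd h3 (not_le.mpr hκ1)
  -- every u-translate of μ coincides with ν
  have hfinal : ∀ r₀ : ℝ, Measure.map (u (-r₀)) μ = ν := by
    intro r₀
    have hm : Measurable (u (-r₀)) := hu_measf _
    have hmprob : IsProbabilityMeasure (Measure.map (u (-r₀)) μ) :=
      Measure.isProbabilityMeasure_map hm.aemeasurable
    haveI := hprob_ν
    haveI : ν.WeaklyRegular := inferInstance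
    have hopen' : ∀ O : Set X, IsOpen O → Measure.map (u (-r₀)) μ O ≤ ν O := by
      intro O hO
      rw [Measure.map_apply hm hO.measurableSet]
      exact hopen r₀ O hO
    have hclosed : ∀ C : Set X, IsClosed C → Measure.map (u (-r₀)) μ C = ν C := by
      intro C hC
      have hCm : MeasurableSet C := hC.measurableSet
      have h1 : ν C ≤ Measure.map (u (-r₀)) μ C := by
        have h2 : Measure.map (u (-r₀)) μ Cᶜ ≤ ν Cᶜ := hopen' _ hC.isOpen_compl
        rw [prob_compl_eq_one_sub hCm, prob_compl_eq_one_sub hCm] at h2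
        exact (ENNReal.sub_le_sub_iff_left prob_le_one ENNReal.one_ne_top).mp h2
      have h2 : Measure.map (u (-r₀)) μ C ≤ ν C := by
        by_contra h
        push_neg at h
        obtain ⟨U, hCU, hUopen, hU⟩ := Set.exists_isOpen_lt_of_lt C _ h
        have : Measure.map (u (-r₀)) μ C ≤ ν U :=
          (measure_mono hCU).trans (hopen' U hUopen)
        exact absurd (this.trans_lt hU) (lt_irrefl _)
      exact le_antisymm h2 h1
    refine ext_of_generate_finite {s : Set X | IsClosed s} ?_ isPiSystem_isClosed
      (fun s hs => hclosed s hs) ?_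
    · rw [BorelSpace.measurable_eq (α := X), borel_eq_generateFrom_isClosed]
    · rw [hmprob.measure_univ, hν_univ]
  -- conclude
  have hμν : μ = ν := by
    have h0 := hfinal 0
    rw [neg_zero, show u 0 = id from funext hu_zero, Measure.map_id] at h0
    exact h0
  intro s
  rw [show u s = u (-(-s)) by rw [neg_neg], hfinal (-s), hμν]
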